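/- Let A be an invertible Hermitian N×N complex matrix, let m ≥ 1 be an integer and ε > 0. If there exist index subsets α, β ⊆ {1,…,N}, each of cardinality m, such that the m×m matrix A⁻¹[α,β]·A⁻¹[β,α] − (1/ε²)·I_m is positive definite, then A has at least m eigenvalues, counted with multiplicity, in the open interval (−ε, ε). -/

import Mathlib

open Matrix
open scoped ComplexOrder

/-- Number of eigenvalues (with multiplicity) of a Hermitian matrix in the open
interval `(a, b)`. -/
noncomputable def eigCountIoo {n : Type*} [Fintype n] [DecidableEq n]
    (M : Matrix n n ℂ) (a b : ℝ) : ℕ :=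
  if hM : M.IsHermitian then Nat.card {i : n // hM.eigenvalues i ∈ Set.Ioo a b} else 0

noncomputable def nsq {n : Type*} [Fintype n] (v : n → ℂ) : ℝ := ∑ i, Complex.normSq (v i)

lemma nsq_nonneg {n : Type*} [Fintype n] (v : n → ℂ) : 0 ≤ nsq v :=
  Finset.sum_nonneg fun _ _ => Complex.normSq_nonneg _

lemma star_dotProduct_self {n : Type*} [Fintype n] (v : n → ℂ) :
    star v ⬝ᵥ v = (nsq v : ℂ) := by
  simp only [dotProduct, nsq, Pi.star_apply, Complex.ofReal_sum]
  exact Finset.sum_congr rfl fun i _ => (Complex.normSq_eq_conj_mul_self).symm ▸ rfl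

lemma nsq_mulVec_unitary {n : Type*} [Fintype n] [DecidableEq n] (U : Matrix n n ℂ)
    (hU : star U * U = 1) (v : n → ℂ) : nsq (U *ᵥ v) = nsq v := by
  rw [Matrix.star_eq_conjTranspose] at hU
  have : ((nsq (U *ᵥ v) : ℝ) : ℂ) = ((nsq v : ℝ) : ℂ) := by
    rw [← star_dotProduct_self, ← star_dotProduct_self, star_mulVec, dotProduct_mulVec,
      vecMul_vecMul, hU, vecMul_one]
  exact_mod_cast this


set_option maxHeartbeats 1600000 in
theorem stmt1 {N : ℕ} (A : Matrix (Fin N) (Fin N) ℂ) (hA : A.IsHermitian)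
    (hInv : IsUnit A) (m : ℕ) (hm : 1 ≤ m) (ε : ℝ) (hε : 0 < ε)
    (h : ∃ (α β : Finset (Fin N)) (hα : α.card = m) (hβ : β.card = m),
      ((A⁻¹).submatrix (fun i => ((α.orderIsoOfFin hα) i : Fin N))
            (fun j => ((β.orderIsoOfFin hβ) j : Fin N)) *
          (A⁻¹).submatrix (fun i => ((β.orderIsoOfFin hβ) i : Fin N))
            (fun j => ((α.orderIsoOfFin hα) j : Fin N)) -
        ((1 / ε ^ 2) : ℝ) • (1 : Matrix (Fin m) (Fin m) ℂ)).PosDef) :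
    m ≤ eigCountIoo A (-ε) ε := by
  classical
  obtain ⟨α, β, hα, hβ, hPD⟩ := h
  set B := A⁻¹ with hBdef
  have hB : B.IsHermitian := hA.inv
  have hdet : IsUnit A.det := (Matrix.isUnit_iff_isUnit_det A).mp hInv
  have hAB : A * B = 1 := Matrix.mul_nonsing_inv A hdet
  set e : Fin m → Fin N := fun i => ((α.orderIsoOfFin hα) i : Fin N) with he
  set f : Fin m → Fin N := fun i => ((β.orderIsoOfFin hβ) i : Fin N) with hf
  have he_inj : Function.Injective e :=
    fun i j hij => (α.orderIsoOfFin hα).injective (Subtype.coe_injective hij)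
  have hf_inj : Function.Injective f :=
    fun i j hij => (β.orderIsoOfFin hβ).injective (Subtype.coe_injective hij)
  set E : Matrix (Fin N) (Fin m) ℂ := fun j i => if j = e i then 1 else 0 with hE
  have hEx : ∀ (x : Fin m → ℂ) i, (E *ᵥ x) (e i) = x i := by
    intro x i
    simp [E, mulVec, dotProduct, he_inj.eq_iff]
  have hEx0 : ∀ (x : Fin m → ℂ) j, (∀ i, j ≠ e i) → (E *ᵥ x) j = 0 := by
    intro x j hj
    simp only [mulVec, dotProduct, hE]
    apply Finset.sum_eq_zero
    intro i _
    rw [if_neg (hj i), zero_mul]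
  have hnsqE : ∀ x : Fin m → ℂ, nsq (E *ᵥ x) = nsq x := by
    intro x
    have h1 : ∑ j, Complex.normSq ((E *ᵥ x) j)
        = ∑ j ∈ Finset.univ.image e, Complex.normSq ((E *ᵥ x) j) := by
      symm
      apply Finset.sum_subset (Finset.subset_univ _)
      intro j _ hj
      have hj' : ∀ i, j ≠ e i := by
        intro i hji
        exact hj (Finset.mem_image.mpr ⟨i, Finset.mem_univ i, hji.symm⟩)
      rw [hEx0 x j hj', Complex.normSq_zero]
    rw [nsq, nsq, h1, Finset.sum_image (fun i _ j _ hij => he_inj hij)]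
    exact Finset.sum_congr rfl fun i _ => by rw [hEx x i]
  have hrestrict : ∀ (w : Fin N → ℂ), (∑ i, Complex.normSq (w (f i))) ≤ nsq w := by
    intro w
    rw [← Finset.sum_image (g := f) (f := fun j => Complex.normSq (w j))
      (fun i _ j _ hij => hf_inj hij)]
    exact Finset.sum_le_sum_of_subset_of_nonneg (Finset.subset_univ _)
      (fun j _ _ => Complex.normSq_nonneg _)
  have hsub : ∀ (x : Fin m → ℂ) i, (B.submatrix f e *ᵥ x) i = (B *ᵥ (E *ᵥ x)) (f i) := by
    intro x i
    simp only [mulVec, dotProduct, submatrix_apply, hE, Finset.mul_sum]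
    rw [Finset.sum_comm]
    refine Finset.sum_congr rfl fun j _ => ?_
    simp [mul_ite]
  have hBsub : B.submatrix e f = (B.submatrix f e)ᴴ := by
    ext i j
    simp only [conjTranspose_apply, submatrix_apply]
    exact (hB.apply (e i) (f j)).symm
  have hkey : ∀ x : Fin m → ℂ, x ≠ 0 →
      (1/ε^2) * nsq x < ∑ i, Complex.normSq ((B *ᵥ (E *ᵥ x)) (f i)) := by
    intro x hx
    have h1 := hPD.dotProduct_mulVec_pos hx
    rw [sub_mulVec, dotProduct_sub] at h1
    have e1 : star x ⬝ᵥ ((B.submatrix e f * B.submatrix f e) *ᵥ x)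
        = ((nsq (B.submatrix f e *ᵥ x) : ℝ) : ℂ) := by
      rw [hBsub, ← mulVec_mulVec, dotProduct_mulVec, ← star_mulVec, star_dotProduct_self]
    have e2 : star x ⬝ᵥ ((((1/ε^2 : ℝ)) • (1 : Matrix (Fin m) (Fin m) ℂ)) *ᵥ x)
        = ((1/ε^2 * nsq x : ℝ) : ℂ) := by
      rw [smul_mulVec, one_mulVec, dotProduct_smul, star_dotProduct_self]
      push_cast
      rw [Complex.real_smul]
      push_cast
      ring
    rw [e1, e2] at h1
    have h2 : (0:ℂ) < ((nsq (B.submatrix f e *ᵥ x) - 1/ε^2 * nsq x : ℝ) : ℂ) := by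
      push_cast at h1 ⊢
      exact h1
    have h3 := Complex.zero_lt_real.mp h2
    have h4 : nsq (B.submatrix f e *ᵥ x)
        = ∑ i, Complex.normSq ((B *ᵥ (E *ᵥ x)) (f i)) :=
      Finset.sum_congr rfl fun i _ => by rw [hsub]
    linarith
  set L : (Fin m → ℂ) →ₗ[ℂ] (Fin N → ℂ) := Matrix.mulVecLin (B * E) with hLdef
  have hLx : ∀ x, L x = B *ᵥ (E *ᵥ x) := fun x => by
    rw [hLdef, Matrix.mulVecLin_apply, ← mulVec_mulVec]
  have hLinj : Function.Injective L := by
    rw [← LinearMap.ker_eq_bot, LinearMap.ker_eq_bot']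
    intro x hx0
    by_contra hx
    have h3 := hkey x hx
    rw [hLx x] at hx0
    have hz : (∑ i, Complex.normSq ((B *ᵥ (E *ᵥ x)) (f i))) = 0 := by
      rw [hx0]; simp
    have h5 := nsq_nonneg x
    have h6 : (0:ℝ) < 1/ε^2 := by positivity
    nlinarith
  -- spectral side
  set V : Matrix (Fin N) (Fin N) ℂ := (hA.eigenvectorUnitary : Matrix (Fin N) (Fin N) ℂ) with hV
  have hV1 : star V * V = 1 := Matrix.mem_unitaryGroup_iff'.mp hA.eigenvectorUnitary.2
  have hV2 : V * star V = 1 := Matrix.mem_unitaryGroup_iff.mp hA.eigenvectorUnitary.2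
  set lam := hA.eigenvalues with hlam
  have hspec : A = V * diagonal (RCLike.ofReal ∘ lam) * star V := hA.spectral_theorem
  set S : Finset (Fin N) := Finset.univ.filter (fun i => lam i ∈ Set.Ioo (-ε) ε) with hS
  set T : (Fin N → ℂ) →ₗ[ℂ] ({i // i ∈ S} → ℂ) :=
    (LinearMap.funLeft ℂ ℂ (fun s : {i // i ∈ S} => (s : Fin N))) ∘ₗ
      Matrix.mulVecLin (star V) with hT
  have hUconj : ∀ w ∈ LinearMap.ker T, ε^2 * nsq w ≤ nsq (A *ᵥ w) := by
    intro w hw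
    set c := star V *ᵥ w with hc
    have hcS : ∀ i, i ∈ S → c i = 0 := by
      intro i hi
      have := congrFun (LinearMap.mem_ker.mp hw) ⟨i, hi⟩
      simpa [hT, LinearMap.funLeft, hc] using this
    have hwc : w = V *ᵥ c := by rw [hc, mulVec_mulVec, hV2, one_mulVec]
    have h5 : nsq w = nsq c := by rw [hwc, nsq_mulVec_unitary V hV1]
    have hAw : A *ᵥ w = V *ᵥ (diagonal (RCLike.ofReal ∘ lam) *ᵥ c) := by
      conv_lhs => rw [hspec]
      rw [← mulVec_mulVec, ← mulVec_mulVec]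
    have h6 : nsq (A *ᵥ w) = nsq (diagonal (RCLike.ofReal ∘ lam) *ᵥ c) := by
      rw [hAw, nsq_mulVec_unitary V hV1]
    rw [h5, h6, nsq, nsq, Finset.mul_sum]
    apply Finset.sum_le_sum
    intro i _
    rw [mulVec_diagonal]
    by_cases hi : i ∈ S
    · rw [hcS i hi]; simp
    · have h7 : ε^2 ≤ (lam i)^2 := by
        have hi' : ¬ (lam i ∈ Set.Ioo (-ε) ε) := fun hmem =>
          hi (Finset.mem_filter.mpr ⟨Finset.mem_univ i, hmem⟩)
        rw [Set.mem_Ioo, not_and_or, not_lt, not_lt] at hi'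
        rcases hi' with h8 | h8
        · have h9 : ε ≤ -lam i := by linarith
          calc ε^2 ≤ (-lam i)^2 := pow_le_pow_left₀ hε.le h9 2
          _ = (lam i)^2 := by ring
        · exact pow_le_pow_left₀ hε.le h8 2
      have h10 : Complex.normSq ((RCLike.ofReal ∘ lam) i * c i)
          = (lam i)^2 * Complex.normSq (c i) := by
        have hcast : ((RCLike.ofReal (lam i) : ℂ)) = Complex.ofReal (lam i) := rfl
        rw [Function.comp_apply, hcast, Complex.normSq_mul, Complex.normSq_ofReal]
        ring
      rw [h10]
      exact mul_le_mul_of_nonneg_right h7 (Complex.normSq_nonneg (c i))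
  -- counting
  set k := S.card with hk
  have hkN : k ≤ N := by
    have := Finset.card_le_univ S
    simpa using this
  have hcount : eigCountIoo A (-ε) ε = k := by
    rw [eigCountIoo, dif_pos hA, hk, ← Fintype.card_coe S, ← Nat.card_eq_fintype_card]
    apply Nat.card_congr
    apply Equiv.subtypeEquivRight
    intro i
    simp [hS, hlam]
  by_contra hcon
  push_neg at hcon
  rw [hcount] at hcon
  have hrangeL : Module.finrank ℂ (LinearMap.range L) = m := by
    rw [LinearMap.finrank_range_of_inj hLinj]
    simp
  have hkerT : N - k ≤ Module.finrank ℂ (LinearMap.ker T) := by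
    have h8 := LinearMap.finrank_range_add_finrank_ker T
    have h9 : Module.finrank ℂ (LinearMap.range T) ≤ k := by
      have h9a := Submodule.finrank_le (LinearMap.range T)
      have h9b : Module.finrank ℂ ({i // i ∈ S} → ℂ) = k := by
        simp [hk]
      omega
    have h8b : Module.finrank ℂ (Fin N → ℂ) = N := by simp
    omega
  have hinter : LinearMap.range L ⊓ LinearMap.ker T ≠ ⊥ := by
    intro hbot
    have h10 := Submodule.finrank_sup_add_finrank_inf_eq (LinearMap.range L) (LinearMap.ker T)
    rw [hbot] at h10
    simp only [finrank_bot, add_zero] at h10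
    have h11 : Module.finrank ℂ ↥(LinearMap.range L ⊔ LinearMap.ker T) ≤ N := by
      have := Submodule.finrank_le (LinearMap.range L ⊔ LinearMap.ker T)
      simpa using this
    omega
  obtain ⟨w, hwmem, hw0⟩ := Submodule.exists_mem_ne_zero_of_ne_bot hinter
  have hwW : w ∈ LinearMap.range L := hwmem.1
  have hwU : w ∈ LinearMap.ker T := hwmem.2
  obtain ⟨x, hxw⟩ := hwW
  have hx0 : x ≠ 0 := by
    rintro rfl
    rw [map_zero] at hxw
    exact hw0 hxw.symm
  have h3 := hkey x hx0
  have h4 := hrestrict (B *ᵥ (E *ᵥ x))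
  have hAw : A *ᵥ w = E *ᵥ x := by
    rw [← hxw, hLx x, mulVec_mulVec, hAB, one_mulVec]
  have hwEq : w = B *ᵥ (E *ᵥ x) := by rw [← hxw, hLx x]
  have h12 : nsq (A *ᵥ w) = nsq x := by rw [hAw, hnsqE]
  have h13 := hUconj w hwU
  rw [h12] at h13
  rw [hwEq] at h13
  have h6 : (0:ℝ) < ε^2 := by positivity
  have h14 := mul_lt_mul_of_pos_left h3 h6
  have hεne : ε ≠ 0 := ne_of_gt hε
  rw [show ε^2 * (1/ε^2 * nsq x) = nsq x by field_simp] at h14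
  have h15 := mul_le_mul_of_nonneg_left h4 h6.le
  linarith
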